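/- For any U ∈ ℋ (square-summable sequence on the half-space grid satisfying the extrapolation condition), there holds ‖D₁,₀ U‖²_{ℓ²(𝓘)} = ‖D₁₊ U‖²_{ℓ²(𝓘)} − (1/4)‖Δ₁ U‖²_{ℓ²(𝓘)}. -/

import Mathlib

noncomputable section

/-- Forward difference in the first variable. -/
def D1p (u : ℤ → ℤ → ℝ) : ℤ → ℤ → ℝ := fun j k => u (j + 1) k - u j k
/-- Backward difference in the first variable. -/
def D1m (u : ℤ → ℤ → ℝ) : ℤ → ℤ → ℝ := fun j k => u j k - u (j - 1) k
/-- Forward difference in the second variable. -/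
def D2p (u : ℤ → ℤ → ℝ) : ℤ → ℤ → ℝ := fun j k => u j (k + 1) - u j k
/-- Backward difference in the second variable. -/
def D2m (u : ℤ → ℤ → ℝ) : ℤ → ℤ → ℝ := fun j k => u j k - u j (k - 1)
/-- Centered difference in the first variable. -/
def D10 (u : ℤ → ℤ → ℝ) : ℤ → ℤ → ℝ := fun j k => (D1p u j k + D1m u j k) / 2
/-- Centered difference in the second variable. -/
def D20 (u : ℤ → ℤ → ℝ) : ℤ → ℤ → ℝ := fun j k => (D2p u j k + D2m u j k) / 2
/-- Discrete Laplacian in the first variable. -/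
def L1 (u : ℤ → ℤ → ℝ) : ℤ → ℤ → ℝ := D1p (D1m u)
/-- Discrete Laplacian in the second variable. -/
def L2 (u : ℤ → ℤ → ℝ) : ℤ → ℤ → ℝ := D2p (D2m u)

/-- Squared ℓ²(ℤ²) norm. -/
def sqZ (u : ℤ → ℤ → ℝ) : ℝ := ∑' p : ℤ × ℤ, (u p.1 p.2) ^ 2
/-- ℓ²(ℤ²) scalar product. -/
def ipZ (u v : ℤ → ℤ → ℝ) : ℝ := ∑' p : ℤ × ℤ, u p.1 p.2 * v p.1 p.2

/-- Squared ℓ²(𝓘) norm over the interior indices 𝓘 = ℕ × ℤ of the half-space grid. -/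
def sqH (u : ℤ → ℤ → ℝ) : ℝ := ∑' p : ℕ × ℤ, (u (p.1 : ℤ) p.2) ^ 2
/-- ℓ²(𝓘) scalar product over the interior indices 𝓘 = ℕ × ℤ. -/
def ipH (u v : ℤ → ℤ → ℝ) : ℝ := ∑' p : ℕ × ℤ, u (p.1 : ℤ) p.2 * v (p.1 : ℤ) p.2
/-- Membership in ℋ : square-summable on the half-space grid and satisfying the
extrapolation (Neumann) boundary condition `u (-1) k = u 0 k`. -/
def memH (u : ℤ → ℤ → ℝ) : Prop :=
  (∀ k : ℤ, u (-1) k = u 0 k) ∧ Summable (fun p : ℕ × ℤ => (u (p.1 : ℤ) p.2) ^ 2)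

/-- Squared ℓ²(𝔦) norm over the interior indices 𝔦 = ℕ × ℕ of the quarter-space grid. -/
def sqQ (u : ℤ → ℤ → ℝ) : ℝ := ∑' p : ℕ × ℕ, (u (p.1 : ℤ) (p.2 : ℤ)) ^ 2
/-- ℓ²(𝔦) scalar product over the interior indices 𝔦 = ℕ × ℕ. -/
def ipQ (u v : ℤ → ℤ → ℝ) : ℝ :=
  ∑' p : ℕ × ℕ, u (p.1 : ℤ) (p.2 : ℤ) * v (p.1 : ℤ) (p.2 : ℤ)
/-- Membership in 𝔥 : square-summable on the quarter-space grid, satisfying the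
extrapolation boundary conditions on both sides and the corner condition. -/
def memQ (u : ℤ → ℤ → ℝ) : Prop :=
  (∀ k : ℤ, -1 ≤ k → u (-1) k = u 0 k) ∧ (∀ j : ℤ, 0 ≤ j → u j (-1) = u j 0) ∧
    Summable (fun p : ℕ × ℕ => (u (p.1 : ℤ) (p.2 : ℤ)) ^ 2)

/-- The skew-selfadjoint part `v` in the decomposition of the Lax-Wendroff scheme. -/
def vop (α β : ℝ) (u : ℤ → ℤ → ℝ) : ℤ → ℤ → ℝ :=
  fun j k => -α * D10 u j k - β * D20 u j k
/-- The selfadjoint part `w` in the decomposition of the Lax-Wendroff scheme. -/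
def wop (α β : ℝ) (u : ℤ → ℤ → ℝ) : ℤ → ℤ → ℝ :=
  fun j k => -(α ^ 2 / 2) * L1 u j k - (β ^ 2 / 2) * L2 u j k
    - α * β * D10 (D20 u) j k + ((α ^ 2 + β ^ 2) / 8) * L1 (L2 u) j k

/-- Lemma 5 (iv): `‖D₁,₀ U‖²_{ℓ²(𝓘)} = ‖D₁₊ U‖²_{ℓ²(𝓘)} − (1/4)‖Δ₁ U‖²_{ℓ²(𝓘)}` for `U ∈ ℋ`. -/
theorem halfspace_d10_norm (U : ℤ → ℤ → ℝ) (hU : memH U) :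
    sqH (D10 U) = sqH (D1p U) - (1 / 4) * sqH (L1 U) := by
  obtain ⟨hbc, hsum⟩ := hU
  set a : ℕ × ℤ → ℝ := fun p => (D1p U (p.1 : ℤ) p.2) ^ 2 with ha_def
  set g : ℕ × ℤ → ℝ := fun p => (D1p U ((p.1 : ℤ) - 1) p.2) ^ 2 with hg_def
  have hinj : Function.Injective (fun p : ℕ × ℤ => (p.1 + 1, p.2)) := by
    intro p q h
    simpa [Prod.ext_iff] using h
  have hshift : Summable (fun p : ℕ × ℤ => (U ((p.1 : ℤ) + 1) p.2) ^ 2) := by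
    have := hsum.comp_injective hinj
    simpa [Function.comp_def] using this
  have ha : Summable a := by
    apply Summable.of_nonneg_of_le (fun p => sq_nonneg _) _
      (((hshift.add hsum).mul_left 2))
    intro p
    have h1 := sq_nonneg (U ((p.1 : ℤ) + 1) p.2 + U (p.1 : ℤ) p.2)
    simp only [ha_def, D1p]
    nlinarith [sq_nonneg (U ((p.1 : ℤ) + 1) p.2), sq_nonneg (U (p.1 : ℤ) p.2)]
  have hgs : (g ∘ fun p : ℕ × ℤ => (p.1 + 1, p.2)) = a := by
    funext p
    simp only [hg_def, ha_def, Function.comp]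
    push_cast
    ring_nf
  have hzero : ∀ p ∉ Set.range (fun p : ℕ × ℤ => (p.1 + 1, p.2)), g p = 0 := by
    rintro ⟨j, k⟩ hp
    have hj : j = 0 := by
      by_contra h
      exact hp ⟨(j - 1, k), by simp [Prod.ext_iff]; omega⟩
    subst hj
    simp only [hg_def, D1p]
    norm_num [hbc k]
  have hg : Summable g := (hinj.summable_iff hzero).mp (by rw [hgs]; exact ha)
  have htg : ∑' p, g p = ∑' p, a p := by
    rw [← hinj.tsum_eq (Function.support_subset_iff'.mpr hzero)]
    exact tsum_congr fun p => congrFun hgs p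
  have hL : Summable (fun p : ℕ × ℤ => (L1 U (p.1 : ℤ) p.2) ^ 2) := by
    apply Summable.of_nonneg_of_le (fun p => sq_nonneg _) _ (((ha.add hg).mul_left 2))
    intro p
    simp only [L1, D1p, D1m, ha_def, hg_def, sub_add_cancel, add_sub_cancel_right]
    nlinarith [sq_nonneg (U ((p.1 : ℤ) + 1) p.2 - U (p.1 : ℤ) p.2
      + (U (p.1 : ℤ) p.2 - U ((p.1 : ℤ) - 1) p.2)),
      sq_nonneg (U ((p.1 : ℤ) - 1 + 1) p.2 - U ((p.1 : ℤ) - 1) p.2)]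
  have key : ∀ p : ℕ × ℤ, (D10 U (p.1 : ℤ) p.2) ^ 2
      = a p - (1 / 4) * (L1 U (p.1 : ℤ) p.2) ^ 2 - (1 / 2) * (a p - g p) := by
    intro p
    simp only [ha_def, hg_def, D10, D1p, D1m, L1, sub_add_cancel, add_sub_cancel_right]
    ring
  have hsub1 : Summable (fun p : ℕ × ℤ => a p - (1 / 4) * (L1 U (p.1 : ℤ) p.2) ^ 2) :=
    ha.sub (hL.mul_left _)
  have hsub2 : Summable (fun p : ℕ × ℤ => (1 / 2) * (a p - g p)) := (ha.sub hg).mul_left _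
  have : sqH (D10 U)
      = ∑' p : ℕ × ℤ, (a p - (1 / 4) * (L1 U (p.1 : ℤ) p.2) ^ 2 - (1 / 2) * (a p - g p)) :=
    tsum_congr key
  rw [this, Summable.tsum_sub hsub1 hsub2, Summable.tsum_sub ha (hL.mul_left _), tsum_mul_left, tsum_mul_left,
    Summable.tsum_sub ha hg, htg]
  simp only [sub_self, mul_zero, sub_zero]
  rfl
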